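/- Let (t_n)_{n≥1} be a non-increasing sequence of real numbers with t_n > 0 for every n and ∑_{n=1}^∞ t_n = ∞. Then there exists a non-increasing sequence (s_n)_{n≥1} such that 0 < s_n ≤ t_n for every n, ∑_{n=1}^∞ s_n = ∞, and ∑_{n=1}^∞ s_n² < ∞. -/

import Mathlib

/-- Lemma 2.3: given a non-increasing positive sequence `t` with divergent series,
there is a non-increasing sequence `s` with `0 < s n ≤ t n`, divergent series,
and square-summable. -/
theorem divergent_antitone_exists_square_summable_minorant
    (t : ℕ → ℝ) (ht_anti : Antitone t) (ht_pos : ∀ n, 0 < t n)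
    (ht_div : ¬ Summable t) :
    ∃ s : ℕ → ℝ, Antitone s ∧ (∀ n, 0 < s n) ∧ (∀ n, s n ≤ t n) ∧
      ¬ Summable s ∧ Summable (fun n => (s n) ^ 2) := by
  set s : ℕ → ℝ := fun n => min (t n) (1 / (n + 1)) with hs
  have hpos : ∀ n, 0 < s n := fun n => lt_min (ht_pos n) (by positivity)
  have hanti : Antitone s := by
    intro m n hmn
    exact min_le_min (ht_anti hmn) (by
      apply one_div_le_one_div_of_le (by positivity)
      exact_mod_cast add_le_add_left (Nat.cast_le.2 hmn) 1)
  have hle : ∀ n, s n ≤ t n := fun n => min_le_left _ _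
  have hsq : Summable (fun n => (s n) ^ 2) := by
    have h1 : Summable (fun n : ℕ => (1 / ((n : ℝ) + 1)) ^ 2) := by
      have := (summable_nat_add_iff (f := fun n : ℕ => 1 / (n : ℝ) ^ 2) 1).2
        (Real.summable_one_div_nat_pow.2 one_lt_two)
      refine this.congr fun n => ?_
      push_cast
      rw [div_pow, one_pow]
    refine Summable.of_nonneg_of_le (fun n => sq_nonneg _) (fun n => ?_) h1
    have : s n ≤ 1 / (n + 1) := min_le_right _ _
    exact pow_le_pow_left₀ (hpos n).le this 2
  refine ⟨s, hanti, hpos, hle, ?_, hsq⟩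
  intro hsum
  -- condensation
  have hcond : Summable (fun k : ℕ => (2 : ℝ) ^ k * s (2 ^ k)) :=
    (summable_condensed_iff_of_nonneg (fun n => (hpos n).le)
      (fun m n _ h => hanti h)).2 hsum
  have htend := hcond.tendsto_atTop_zero
  have hev : ∀ᶠ k in Filter.atTop, (2 : ℝ) ^ k * s (2 ^ k) < 1 / 2 :=
    htend.eventually (Filter.Tendsto.eventually_lt_const (by norm_num) Filter.tendsto_id)
  obtain ⟨N, hN⟩ := hev.exists_forall_of_atTop
  have heq : ∀ k ≥ N, (2 : ℝ) ^ k * t (2 ^ k) = (2 : ℝ) ^ k * s (2 ^ k) := by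
    intro k hk
    have h2 : (0 : ℝ) < 2 ^ k := by positivity
    have hs2 : s (2 ^ k) < 1 / 2 ^ (k + 1) := by
      have := hN k hk
      rw [pow_succ]
      rw [lt_div_iff₀ (by positivity)]
      nlinarith
    have hlt : s (2 ^ k) < 1 / ((2 ^ k : ℕ) + 1) := by
      refine hs2.trans_le ?_
      apply one_div_le_one_div_of_le (by positivity)
      push_cast
      rw [pow_succ]
      nlinarith [one_le_pow₀ (one_le_two (α := ℝ)) (n := k)]
    have : s (2 ^ k) = t (2 ^ k) := by
      rcases min_cases (t (2 ^ k)) (1 / ((2 ^ k : ℕ) + 1) : ℝ) with ⟨h1, _⟩ | ⟨h1, _⟩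
      · simpa [hs] using h1
      · exfalso
        have : s (2 ^ k) = 1 / ((2 ^ k : ℕ) + 1) := by simpa [hs] using h1
        rw [this] at hlt; exact lt_irrefl _ hlt
    rw [this]
  have hcondt : Summable (fun k : ℕ => (2 : ℝ) ^ k * t (2 ^ k)) := by
    rw [← summable_nat_add_iff N]
    refine ((summable_nat_add_iff (f := fun k : ℕ => (2:ℝ) ^ k * s (2 ^ k)) N).2
      hcond).congr fun k => ?_
    exact (heq (k + N) (Nat.le_add_left _ _)).symm
  exact ht_div ((summable_condensed_iff_of_nonneg (fun n => (ht_pos n).le)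
    (fun m n _ h => ht_anti h)).1 hcondt)
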